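/- Let K be a field and p₁,…,p_n ∈ K[t₁,…,t_k] be linearly independent over K. Choose n mutually disjoint families of fresh indeterminates and substitute the i-th family into each polynomial to get entries p_j(row i). Then the determinant of the n×n matrix with (i,j)-entry p_j evaluated at the i-th family of indeterminates is a nonzero element of the polynomial ring in all n·k indeterminates. -/

import Mathlib

open MvPolynomial Finsupp


lemma exists_det_coords_ne_zero {K α : Type*} [Field K] {n : ℕ} (v : Fin n → (α →₀ K))
    (h : LinearIndependent K v) :
    ∃ d : Fin n → α, (Matrix.of fun i j : Fin n => v j (d i)).det ≠ 0 := by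
  classical
  set S : Finset α := Finset.univ.biUnion fun j => (v j).support with hS
  set A : Matrix S (Fin n) K := Matrix.of fun s j => v j (s : α) with hA
  have hinj : Function.Injective A.mulVecLin := by
    rw [← LinearMap.ker_eq_bot]
    ext c
    simp only [LinearMap.mem_ker, Submodule.mem_bot]
    constructor
    · intro hc
      have hzero : (∑ j, c j • v j) = 0 := by
        ext a
        by_cases ha : a ∈ S
        · simpa [Matrix.mulVec, dotProduct, hA, mul_comm] using
            congrFun hc ⟨a, ha⟩
        · have : ∀ j, v j a = 0 := by
            intro j
            by_contra hja
            exact ha (Finset.mem_biUnion.2 ⟨j, Finset.mem_univ _, Finsupp.mem_support_iff.2 hja⟩)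
          simp [this]
      have := (Fintype.linearIndependent_iff.1 h) c hzero
      funext j; exact this j
    · rintro rfl; simp
  have hrank : A.rank = n := by
    rw [Matrix.rank, LinearMap.finrank_range_of_inj hinj]
    simp
  have hrows : Submodule.span K (Set.range (fun s : S => (fun j => v j (s : α)) : S → Fin n → K)) = ⊤ := by
    apply Submodule.eq_top_of_finrank_eq
    have := A.rank_transpose
    rw [hrank] at this
    rw [Matrix.rank_eq_finrank_span_cols, Matrix.col_transpose, Matrix.row] at this
    rw [Module.finrank_fintype_fun_eq_card, Fintype.card_fin]; exact this
  -- extract an independent spanning subset of the rows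
  obtain ⟨t, hts, htspan, htli⟩ :=
    exists_linearIndependent K (Set.range (fun s : S => (fun j => v j (s : α)) : S → Fin n → K))
  rw [hrows] at htspan
  have : Fintype t := htli.setFinite.fintype
  let b : Module.Basis t K (Fin n → K) := Module.Basis.mk htli (by rw [Subtype.range_coe, htspan])
  have hcard : Fintype.card t = n := by
    rw [← Module.finrank_eq_card_basis b, Module.finrank_fintype_fun_eq_card, Fintype.card_fin]
  let e : Fin n ≃ t := (Fintype.equivFinOfCardEq hcard).symm
  -- each element of t is a row
  have hchoice : ∀ i : Fin n, ∃ a : α, (fun j => v j a) = (e i : Fin n → K) := by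
    intro i
    obtain ⟨s, hs⟩ := hts (e i).2
    exact ⟨(s : α), hs⟩
  choose d hd using hchoice
  refine ⟨d, ?_⟩
  have hrowsli : LinearIndependent K (fun i : Fin n => (Matrix.of fun i j : Fin n => v j (d i)) i) := by
    have : (fun i : Fin n => (Matrix.of fun i j : Fin n => v j (d i)) i)
        = (fun x : t => (x : Fin n → K)) ∘ e := by
      funext i; exact hd i
    rw [this]
    exact htli.comp e e.injective
  have := Matrix.linearIndependent_rows_iff_isUnit.1 hrowsli
  exact (Matrix.isUnit_iff_isUnit_det _).1 this |>.ne_zero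


lemma coeff_prod_rename_disjoint {K : Type*} [CommSemiring K] {n k : ℕ}
    (s : Finset (Fin n)) (q : Fin n → MvPolynomial (Fin k) K) (d : Fin n → (Fin k →₀ ℕ)) :
    MvPolynomial.coeff (∑ i ∈ s, (d i).mapDomain (Prod.mk i))
      (∏ i ∈ s, MvPolynomial.rename (fun t => (i, t)) (q i))
      = ∏ i ∈ s, MvPolynomial.coeff (d i) (q i) := by
  classical
  induction s using Finset.induction_on with
  | empty => simp
  | @insert a s ha ih =>
    rw [Finset.sum_insert ha, Finset.prod_insert ha, Finset.prod_insert ha]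
    set E : (Fin n × Fin k) →₀ ℕ := (d a).mapDomain (Prod.mk a) with hE
    set R : (Fin n × Fin k) →₀ ℕ := ∑ i ∈ s, (d i).mapDomain (Prod.mk i) with hR
    set P : MvPolynomial (Fin n × Fin k) K := rename (fun t => (a, t)) (q a) with hP
    set Q : MvPolynomial (Fin n × Fin k) K := ∏ i ∈ s, rename (fun t => (i, t)) (q i) with hQ
    have hmkinj : ∀ i : Fin n, Function.Injective (fun t : Fin k => (i, t)) := by
      intro i x y hxy; simpa using congrArg Prod.snd hxy
    -- supports
    have hPsup : ∀ u ∈ P.support, ∀ z ∈ u.support, z.1 = a := by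
      intro u hu z hz
      have : z ∈ P.vars := mem_vars z |>.2 ⟨u, hu, hz⟩
      have := vars_rename (fun t => (a, t)) (q a) this
      obtain ⟨w, -, rfl⟩ := Finset.mem_image.1 this
      rfl
    have hQsup : ∀ u ∈ Q.support, ∀ z ∈ u.support, z.1 ∈ s := by
      intro u hu z hz
      have hzv : z ∈ Q.vars := mem_vars z |>.2 ⟨u, hu, hz⟩
      have := vars_prod (fun i => rename (fun t : Fin k => (i, t)) (q i)) hzv
      obtain ⟨i, hi, hzi⟩ := Finset.mem_biUnion.1 this
      have := vars_rename _ _ hzi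
      obtain ⟨w, -, rfl⟩ := Finset.mem_image.1 this
      exact hi
    have hEsup : ∀ z ∈ E.support, z.1 = a := by
      intro z hz
      have := Finsupp.mapDomain_support hz
      obtain ⟨w, -, rfl⟩ := Finset.mem_image.1 this
      rfl
    have hRsup : ∀ z ∈ R.support, z.1 ∈ s := by
      intro z hz
      have := Finsupp.support_finset_sum hz
      obtain ⟨i, hi, hzi⟩ := Finset.mem_biUnion.1 this
      have := Finsupp.mapDomain_support hzi
      obtain ⟨w, -, rfl⟩ := Finset.mem_image.1 this
      exact hi
    rw [coeff_mul]
    rw [Finset.sum_eq_single_of_mem (E, R) (Finset.HasAntidiagonal.mem_antidiagonal.2 rfl)]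
    · rw [hE, hP, coeff_rename_mapDomain _ (hmkinj a), ih]
    · rintro ⟨u, vv⟩ hmem hne
      by_contra hnz
      have hu0 : coeff u P ≠ 0 := fun h0 => hnz (by simp [h0])
      have hv0 : coeff vv Q ≠ 0 := fun h0 => hnz (by simp [h0])
      have huP := hPsup u (Finsupp.mem_support_iff.2 hu0 : _ ∈ P.support)
      have hvQ := hQsup vv (Finsupp.mem_support_iff.2 hv0 : _ ∈ Q.support)
      have hsum : u + vv = E + R := Finset.HasAntidiagonal.mem_antidiagonal.1 hmem
      have hu : u = E := by
        have h1 : (u + vv).filter (fun z => z.1 = a) = u := by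
          rw [Finsupp.filter_add]
          rw [(Finsupp.filter_eq_self_iff _ _).2 (fun x hx => huP x (Finsupp.mem_support_iff.2 hx)),
            (Finsupp.filter_eq_zero_iff _ _).2 ?_, add_zero]
          intro x hxa
          by_contra hxne
          exact ha (hxa ▸ hvQ x (Finsupp.mem_support_iff.2 hxne))
        have h2 : (E + R).filter (fun z => z.1 = a) = E := by
          rw [Finsupp.filter_add]
          rw [(Finsupp.filter_eq_self_iff _ _).2 (fun x hx => hEsup x (Finsupp.mem_support_iff.2 hx)),
            (Finsupp.filter_eq_zero_iff _ _).2 ?_, add_zero]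
          intro x hxa
          by_contra hxne
          exact ha (hxa ▸ hRsup x (Finsupp.mem_support_iff.2 hxne))
        rw [← h1, hsum, h2]
      have hv : vv = R := by
        have := hsum
        rw [hu] at this
        exact add_left_cancel this
      exact hne (by rw [hu, hv])

/-- If `p₁,…,p_n ∈ K[t₁,…,t_k]` are linearly independent over `K`, then the determinant
of the `n×n` matrix whose `(i,j)` entry is `p_j` evaluated in the `i`-th of `n` mutually
disjoint fresh families of indeterminates is a nonzero polynomial in the `n·k`
indeterminates. -/
theorem det_of_substituted_independent_polynomials_ne_zero
    {K : Type*} [Field K] (n k : ℕ) (p : Fin n → MvPolynomial (Fin k) K)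
    (hli : LinearIndependent K p) :
    (Matrix.of fun i j : Fin n =>
        MvPolynomial.rename (fun t : Fin k => ((i, t) : Fin n × Fin k)) (p j)).det ≠ 0 := by
  classical
  -- view p j as finsupps
  have hli' : LinearIndependent K (fun j => ((MvPolynomial.basisMonomials (Fin k) K).repr (p j) :
      (Fin k →₀ ℕ) →₀ K)) :=
    hli.map' (MvPolynomial.basisMonomials (Fin k) K).repr.toLinearMap
      (LinearEquiv.ker _)
  obtain ⟨d, hdet⟩ := exists_det_coords_ne_zero _ hli'
  have hcoeff : ∀ j m, ((MvPolynomial.basisMonomials (Fin k) K).repr (p j)) m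
      = MvPolynomial.coeff m (p j) := fun j m => rfl
  intro hzero
  apply hdet
  -- the coefficient of the block monomial in the determinant equals det of coeff matrix
  set M₀ : (Fin n × Fin k) →₀ ℕ := ∑ i, (d i).mapDomain (Prod.mk i) with hM₀
  have key : MvPolynomial.coeff M₀
      (Matrix.of fun i j : Fin n =>
        MvPolynomial.rename (fun t : Fin k => ((i, t) : Fin n × Fin k)) (p j)).det
      = (Matrix.of fun i j : Fin n =>
          ((MvPolynomial.basisMonomials (Fin k) K).repr (p j)) (d i)).det := by
    rw [Matrix.det_apply, MvPolynomial.coeff_sum]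
    rw [Matrix.det_apply]
    refine Finset.sum_congr rfl fun σ _ => ?_
    rw [MvPolynomial.coeff_smul]
    have h1 : (∏ i, (Matrix.of fun i j : Fin n =>
        MvPolynomial.rename (fun t : Fin k => ((i, t) : Fin n × Fin k)) (p j)) (σ i) i)
        = ∏ i, MvPolynomial.rename (fun t : Fin k => ((i, t) : Fin n × Fin k)) (p (σ⁻¹ i)) := by
      rw [← Equiv.prod_comp σ
        (fun j => MvPolynomial.rename (fun t : Fin k => ((j, t) : Fin n × Fin k)) (p (σ⁻¹ j)))]
      simp
    rw [h1]
    have h2 := coeff_prod_rename_disjoint (K := K) Finset.univ (fun i => p (σ⁻¹ i)) d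
    rw [hM₀, h2]
    rw [← Equiv.prod_comp σ (fun i => MvPolynomial.coeff (d i) (p (σ⁻¹ i)))]
    simp [hcoeff]
  rw [hzero] at key
  simp only [MvPolynomial.coeff_zero] at key
  exact key.symm
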